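/- Let φ, f be analytic on the disc and let the Liouville weighted composition operator A_{f,φ} g = f · (g∘φ)′ = f·φ′·(g′∘φ) be densely defined on H². If γ : [0,T] → 𝔻 is a C¹ trajectory with γ̇ = f(γ) and φ∘γ remains in 𝔻, then the occupation kernel Γ_γ lies in the domain of A_{f,φ}* and A_{f,φ}* Γ_γ = K_{φ(γ(T))} − K_{φ(γ(0))}. -/

import Mathlib

open Metric ComplexConjugate

noncomputable abbrev H2 : Type := lp (fun _ : ℕ => ℂ) 2

noncomputable def hardyEval (h : H2) (z : ℂ) : ℂ := ∑' n : ℕ, h n * z ^ n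

lemma summable_coeff (g : H2) {z : ℂ} (hz : ‖z‖ < 1) :
    Summable fun n : ℕ => g n * z ^ n := by
  apply Summable.of_norm
  apply Summable.of_nonneg_of_le (fun n => norm_nonneg _) (fun n => ?_)
    ((summable_geometric_of_lt_one (norm_nonneg z) hz).mul_left ‖g‖)
  rw [norm_mul, norm_pow]
  gcongr
  exact lp.norm_apply_le_norm (by norm_num) g n

lemma hasSum_coeff (g : H2) {z : ℂ} (hz : ‖z‖ < 1) :
    HasSum (fun n : ℕ => g n * z ^ n) (hardyEval g z) :=
  (summable_coeff g hz).hasSum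

noncomputable def H2series (g : H2) : FormalMultilinearSeries ℂ ℂ ℂ :=
  fun n => ContinuousMultilinearMap.mkPiRing ℂ (Fin n) (g n)

lemma hasFPower (g : H2) : HasFPowerSeriesOnBall (hardyEval g) (H2series g) 0 1 := by
  constructor
  · apply FormalMultilinearSeries.le_radius_of_bound _ ‖g‖
    intro n
    simp only [H2series, ContinuousMultilinearMap.norm_mkPiRing, one_pow, mul_one]
    simpa using lp.norm_apply_le_norm (by norm_num) g n
  · exact one_pos
  · intro y hy
    have hy' : ‖y‖ < 1 := by
      simpa [EMetric.mem_ball, edist_zero_right, ← ENNReal.coe_one,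
        ENNReal.coe_lt_coe, ← NNReal.coe_lt_coe] using hy
    have := hasSum_coeff g hy'
    simp only [zero_add]
    convert this using 1
    · rfl
    ext n
    simp [H2series, ContinuousMultilinearMap.mkPiRing_apply, smul_eq_mul, mul_comm]

lemma analyticAt_hardyEval (g : H2) {z : ℂ} (hz : ‖z‖ < 1) :
    AnalyticAt ℂ (hardyEval g) z := by
  apply (hasFPower g).analyticAt_of_mem
  simpa [EMetric.mem_ball, edist_zero_right, ← ENNReal.coe_one,
    ENNReal.coe_lt_coe, ← NNReal.coe_lt_coe] using hz

lemma memℓp_pow {a : ℂ} (ha : ‖a‖ < 1) : Memℓp (fun n : ℕ => a ^ n) 2 := by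
  apply memℓp_gen
  have h2 : (2 : ENNReal).toReal = 2 := by simp
  have : (fun n : ℕ => ‖a ^ n‖ ^ (2:ENNReal).toReal) = fun n => (‖a‖^2)^n := by
    ext n
    rw [h2, norm_pow, Real.rpow_two]
    ring
  rw [this]
  exact summable_geometric_of_lt_one (by positivity) (by nlinarith [norm_nonneg a])

/-- For a densely defined Liouville weighted composition operator
`A_{f,φ} g = f·φ′·(g′∘φ)` and a trajectory `γ̇ = f(γ)` with `φ∘γ` staying in `𝔻`,
the occupation kernel `Γ_γ` lies in the domain of `A_{f,φ}*` and
`A_{f,φ}* Γ_γ = K_{φ(γ(T))} − K_{φ(γ(0))}`. -/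
theorem weighted_adjoint_on_occupation_kernel (f φ : ℂ → ℂ)
    (hf : AnalyticOnNhd ℂ f (ball (0 : ℂ) 1))
    (hφ : AnalyticOnNhd ℂ φ (ball (0 : ℂ) 1))
    (hdense : Dense {g : H2 | ∃ u : H2, ∀ z ∈ ball (0 : ℂ) 1,
      hardyEval u z = f z * deriv φ z * deriv (hardyEval g) (φ z)})
    (T : ℝ) (hT : 0 < T) (γ : ℝ → ℂ)
    (hγmap : ∀ t ∈ Set.Icc (0 : ℝ) T, γ t ∈ ball (0 : ℂ) 1)
    (hφγmap : ∀ t ∈ Set.Icc (0 : ℝ) T, φ (γ t) ∈ ball (0 : ℂ) 1)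
    (hγode : ∀ t ∈ Set.Icc (0 : ℝ) T, HasDerivAt γ (f (γ t)) t)
    (Γ : H2)
    (hΓ : ∀ g : H2, ∑' n : ℕ, g n * conj (Γ n) = ∫ t in (0 : ℝ)..T, hardyEval g (γ t)) :
    Memℓp (fun n : ℕ => (conj (φ (γ T))) ^ n - (conj (φ (γ 0))) ^ n) 2 ∧
    ∀ g u : H2,
      (∀ z ∈ ball (0 : ℂ) 1,
        hardyEval u z = f z * deriv φ z * deriv (hardyEval g) (φ z)) →
      ∑' n : ℕ, u n * conj (Γ n) =
      ∑' n : ℕ, g n * conj ((conj (φ (γ T))) ^ n - (conj (φ (γ 0))) ^ n) := by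
  have h0 : (0:ℝ) ∈ Set.Icc (0:ℝ) T := ⟨le_refl 0, hT.le⟩
  have hTm : T ∈ Set.Icc (0:ℝ) T := ⟨hT.le, le_refl T⟩
  have ha : ‖φ (γ T)‖ < 1 := by simpa [mem_ball_zero_iff] using hφγmap T hTm
  have hb : ‖φ (γ 0)‖ < 1 := by simpa [mem_ball_zero_iff] using hφγmap 0 h0
  constructor
  · exact (memℓp_pow (by simpa using ha)).sub (memℓp_pow (by simpa using hb))
  · intro g u hu
    have key : ∀ t ∈ Set.uIcc (0:ℝ) T,
        HasDerivAt (fun s => hardyEval g (φ (γ s))) (hardyEval u (γ t)) t := by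
      intro t ht
      rw [Set.uIcc_of_le hT.le] at ht
      have hφγt : ‖φ (γ t)‖ < 1 := by simpa [mem_ball_zero_iff] using hφγmap t ht
      have h1 := hγode t ht
      have h2 : HasDerivAt φ (deriv φ (γ t)) (γ t) :=
        ((hφ _ (hγmap t ht)).differentiableAt).hasDerivAt
      have h3 : HasDerivAt (hardyEval g) (deriv (hardyEval g) (φ (γ t))) (φ (γ t)) :=
        ((analyticAt_hardyEval g hφγt).differentiableAt).hasDerivAt
      have hc := h3.comp t (h2.comp t h1)
      rw [hu (γ t) (hγmap t ht)]
      convert hc using 1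
      case e'_9 => ring
      all_goals rfl
    have hcont : ContinuousOn (fun t => hardyEval u (γ t)) (Set.uIcc (0:ℝ) T) := by
      rw [Set.uIcc_of_le hT.le]
      intro t ht
      exact (((analyticAt_hardyEval u
        (by simpa [mem_ball_zero_iff] using hγmap t ht)).continuousAt).comp
        (hγode t ht).continuousAt).continuousWithinAt
    have hFTC : ∫ t in (0:ℝ)..T, hardyEval u (γ t)
        = hardyEval g (φ (γ T)) - hardyEval g (φ (γ 0)) :=
      intervalIntegral.integral_eq_sub_of_hasDerivAt key hcont.intervalIntegrable
    rw [hΓ u, hFTC]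
    have hrw : (fun n : ℕ => g n * conj ((conj (φ (γ T)))^n - (conj (φ (γ 0)))^n))
        = fun n => g n * (φ (γ T))^n - g n * (φ (γ 0))^n := by
      ext n
      simp [map_sub, map_pow, mul_sub]
    rw [hrw, Summable.tsum_sub (summable_coeff g ha) (summable_coeff g hb)]
    rfl
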